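/- For ρ > 0 and τ > 0 with τ not a multiple of 2π, letting u_j = 2ρ/((2πj)² + ρ²), v_j = (2πj/ρ)u_j, and λ = 2ρ/(τ² + ρ²), the infinite series identity Σ_{j=1}^∞ v_j²/(u_j - λ) = (τ/(2ρ))·cot(τ/2) - (1/2)·coth(ρ/2) holds, provided λ ≠ u_j for all j. -/

import Mathlib

open Real MeasureTheory Set Filter intervalIntegral

noncomputable section

namespace SeriesA2

lemma hasDerivAt_C (c d : ℂ) (x : ℝ) :
    HasDerivAt (fun y : ℝ => Complex.cos (c * (y : ℂ) - d))
      (-c * Complex.sin (c * (x : ℂ) - d)) x := by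
  have h : HasDerivAt (fun z : ℂ => Complex.cos (c * z - d))
      (-Complex.sin (c * (x : ℂ) - d) * c) (x : ℂ) := by
    simpa using (((hasDerivAt_id ((x : ℝ) : ℂ)).const_mul c).sub_const d).ccos
  simpa [mul_comm] using h.comp_ofReal

lemma hasDerivAt_S (c d : ℂ) (x : ℝ) :
    HasDerivAt (fun y : ℝ => Complex.sin (c * (y : ℂ) - d))
      (c * Complex.cos (c * (x : ℂ) - d)) x := by
  have h : HasDerivAt (fun z : ℂ => Complex.sin (c * z - d))
      (Complex.cos (c * (x : ℂ) - d) * c) (x : ℂ) := by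
    simpa using (((hasDerivAt_id ((x : ℝ) : ℂ)).const_mul c).sub_const d).csin
  simpa [mul_comm] using h.comp_ofReal

end SeriesA2

namespace SeriesA2

lemma F_cont (c : ℂ) : Continuous (fun x : ℝ => Complex.cos (c * (x:ℂ) - c * π)) := by
  fun_prop

lemma F'_cont (c : ℂ) : Continuous (fun x : ℝ => -c * Complex.sin (c * (x:ℂ) - c * π)) := by
  fun_prop

lemma coeff_formula (c : ℂ) (hc : ∀ n : ℤ, c ^ 2 ≠ (n : ℂ) ^ 2) (n : ℤ)
    (hab : (0:ℝ) < 0 + 2 * π) :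
    fourierCoeffOn hab (fun x : ℝ => Complex.cos (c * (x:ℂ) - c * π)) n
      = c * Complex.sin (c * π) / (π * (c ^ 2 - (n : ℂ) ^ 2)) := by
  have hc0 : c ≠ 0 := by
    intro h
    exact hc 0 (by simp [h])
  have hπ : (π : ℂ) ≠ 0 := by
    exact_mod_cast Real.pi_ne_zero
  rcases eq_or_ne n 0 with rfl | hn
  · rw [fourierCoeffOn_eq_integral]
    have hint : ∫ x in (0:ℝ)..(0 + 2*π), Complex.cos (c * (x:ℂ) - c * π)
        = c⁻¹ * Complex.sin (c * ((0:ℝ) + 2*π : ℝ) - c * π)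
          - c⁻¹ * Complex.sin (c * ((0:ℝ):ℂ) - c * π) := by
      apply intervalIntegral.integral_eq_sub_of_hasDerivAt
        (f := fun x : ℝ => c⁻¹ * Complex.sin (c * (x:ℂ) - c * π))
      · intro x hx
        have := (hasDerivAt_S c (c * π) x).const_mul c⁻¹
        convert this using 1
        · rfl
        field_simp
      · exact ((F_cont c)).intervalIntegrable _ _
    simp only [neg_zero, fourier_zero, one_smul]
    rw [hint]
    have h1 : c * (((0:ℝ) + 2*π : ℝ) : ℂ) - c * π = c * π := by
      push_cast; ring
    have h2 : c * (((0:ℝ)) : ℂ) - c * π = -(c * π) := by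
      push_cast; ring
    rw [h1, h2, Complex.sin_neg]
    rw [Complex.real_smul]
    push_cast
    field_simp
    ring
  · have hab' : (0:ℝ) < 0 + 2 * π := hab
    set F : ℝ → ℂ := fun x : ℝ => Complex.cos (c * (x:ℂ) - c * π) with hF
    set F' : ℝ → ℂ := fun x : ℝ => -c * Complex.sin (c * (x:ℂ) - c * π) with hF'
    have hdF : ∀ x ∈ Set.uIcc (0:ℝ) (0 + 2*π), HasDerivAt F (F' x) x := fun x _ => hasDerivAt_C c (c*π) x
    have hdF' : ∀ x ∈ Set.uIcc (0:ℝ) (0 + 2*π), HasDerivAt F' (-(c^2) * F x) x := by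
      intro x _
      have := (hasDerivAt_S c (c * π) x).const_mul (-c)
      convert this using 1
      · rfl
      simp [hF]
      ring
    have e1 := fourierCoeffOn_of_hasDerivAt hab hn hdF ((F'_cont c).intervalIntegrable _ _)
    have e2 := fourierCoeffOn_of_hasDerivAt hab hn hdF'
      ((continuous_const.mul (F_cont c)).intervalIntegrable _ _)
    have e3 : fourierCoeffOn hab (fun x => -(c^2) * F x) n = -(c^2) * fourierCoeffOn hab F n :=
      fourierCoeffOn.const_mul F (-(c^2)) n hab
    rw [e3] at e2
    have hF2π : F (0 + 2*π) - F 0 = 0 := by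
      simp only [hF]
      have h1 : c * (((0:ℝ) + 2*π : ℝ) : ℂ) - c * π = c * π := by push_cast; ring
      have h2 : c * (((0:ℝ)) : ℂ) - c * π = -(c * π) := by push_cast; ring
      rw [h1, h2, Complex.cos_neg, sub_self]
    have hF'2π : F' (0 + 2*π) - F' 0 = -(2 * c * Complex.sin (c * π)) := by
      simp only [hF']
      have h1 : c * (((0:ℝ) + 2*π : ℝ) : ℂ) - c * π = c * π := by push_cast; ring
      have h2 : c * (((0:ℝ)) : ℂ) - c * π = -(c * π) := by push_cast; ring
      rw [h1, h2, Complex.sin_neg]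
      ring
    rw [hF2π] at e1
    rw [hF'2π] at e2
    have hfour : fourier (-n) ((0:ℝ) : AddCircle (0 + 2*π - 0)) = 1 := by
      have : ((0:ℝ) : AddCircle (0 + 2*π - 0)) = 0 := by norm_cast
      rw [this, fourier_eval_zero]
    rw [hfour] at e1 e2
    have hn' : (n : ℂ) ≠ 0 := Int.cast_ne_zero.mpr hn
    have hcn : c ^ 2 - (n:ℂ) ^ 2 ≠ 0 := sub_ne_zero.mpr (hc n)
    have hI : Complex.I ≠ 0 := Complex.I_ne_zero
    set X := fourierCoeffOn hab F n
    set Y := fourierCoeffOn hab F' n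
    rw [e2] at e1
    push_cast at e1
    rw [eq_div_iff (mul_ne_zero hπ hcn)]
    field_simp [hπ, hn', hI] at e1
    rw [mul_comm (π:ℂ) c] at e1
    have goal' : (4*(π:ℂ)) * (X * ((π:ℂ) * (c ^ 2 - (n:ℂ) ^ 2))) = (4*(π:ℂ)) * (c * Complex.sin (c * (π:ℂ))) := by
      linear_combination e1 + (-(4:ℂ)*(π:ℂ)^2*(n:ℂ)^2*X) * Complex.I_sq
    exact mul_left_cancel₀ (by simp [hπ]) goal'
end SeriesA2

namespace SeriesA2

lemma summable_formula (c : ℂ) (hc : ∀ n : ℤ, c ^ 2 ≠ (n : ℂ) ^ 2) :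
    Summable (fun n : ℤ => c * Complex.sin (c * π) / (π * (c ^ 2 - (n : ℂ) ^ 2))) := by
  have h2 : Summable (fun n : ℤ => 2 * ‖c * Complex.sin (c * π) / (π:ℂ)‖ * (1 / (n:ℝ) ^ 2)) :=
    (Summable.mul_left _ (Real.summable_one_div_int_pow.mpr one_lt_two))
  apply Summable.of_norm_bounded_eventually h2
  have hfin : {n : ℤ | ¬ (2 * ‖c‖ ^ 2 + 2 ≤ (n:ℝ) ^ 2)}.Finite := by
    apply Set.Finite.subset (Set.finite_Icc (-(⌈2 * ‖c‖ ^ 2 + 2⌉)) ⌈2 * ‖c‖ ^ 2 + 2⌉)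
    intro n hn
    simp only [Set.mem_setOf_eq, not_le] at hn
    have h1 : ((n : ℝ)) ^ 2 < (⌈2 * ‖c‖ ^ 2 + 2⌉ : ℝ) := lt_of_lt_of_le hn (Int.le_ceil _)
    have h2' : (n : ℝ) ^ 2 = ((n ^ 2 : ℤ) : ℝ) := by push_cast; ring
    rw [h2'] at h1
    have h3 : n ^ 2 < ⌈2 * ‖c‖ ^ 2 + 2⌉ := by exact_mod_cast h1
    have h4 : |n| ≤ n ^ 2 := by nlinarith [abs_nonneg n, sq_abs n]
    have h5 : |n| ≤ ⌈2 * ‖c‖ ^ 2 + 2⌉ := by omega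
    rw [abs_le] at h5
    exact ⟨h5.1, h5.2⟩
  apply Filter.eventually_cofinite.mpr (hfin.subset _)
  intro n hn
  simp only [Set.mem_setOf_eq]
  intro hbig
  apply hn
  have hn2 : (0:ℝ) < (n:ℝ) ^ 2 := by nlinarith [norm_nonneg c]
  have hlow : (n:ℝ) ^ 2 / 2 ≤ ‖c ^ 2 - (n:ℂ) ^ 2‖ := by
    have h1 : ‖((n:ℂ)) ^ 2‖ - ‖c ^ 2‖ ≤ ‖c ^ 2 - (n:ℂ) ^ 2‖ := by
      rw [norm_sub_rev]
      exact (norm_sub_norm_le _ _)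
    have h2' : ‖((n:ℂ)) ^ 2‖ = (n:ℝ) ^ 2 := by
      rw [norm_pow]
      simp [Complex.norm_intCast]
    have h3 : ‖c ^ 2‖ = ‖c‖ ^ 2 := norm_pow _ _
    nlinarith
  have hD : 0 < ‖c ^ 2 - (n:ℂ) ^ 2‖ := lt_of_lt_of_le (by positivity) hlow
  have hπpos : 0 < ‖(π:ℂ)‖ := by
    simp [Complex.norm_real, Real.pi_pos, abs_of_pos Real.pi_pos]
  have hK : 0 ≤ ‖c * Complex.sin (c * (π:ℂ))‖ := norm_nonneg _
  rw [norm_div, norm_div, norm_mul (π:ℂ)]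
  have key : 2 * (‖c * Complex.sin (c * (π:ℂ))‖ / ‖(π:ℂ)‖) * (1 / (n:ℝ) ^ 2)
      = 2 * ‖c * Complex.sin (c * (π:ℂ))‖ / ((n:ℝ) ^ 2 * ‖(π:ℂ)‖) := by
    field_simp
  rw [key, div_le_div_iff₀ (by positivity) (by positivity)]
  nlinarith [mul_le_mul_of_nonneg_left hlow
    (by positivity : (0:ℝ) ≤ 2 * ‖c * Complex.sin (c * (π:ℂ))‖ * ‖(π:ℂ)‖)]

end SeriesA2

namespace SeriesA2

lemma key_hasSum (c : ℂ) (hc : ∀ n : ℤ, c ^ 2 ≠ (n : ℂ) ^ 2) :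
    HasSum (fun n : ℤ => c * Complex.sin (c * π) / (π * (c ^ 2 - (n : ℂ) ^ 2)))
      (Complex.cos (c * π)) := by
  haveI hT : Fact (0 < 2 * π) := ⟨by positivity⟩
  set F : ℝ → ℂ := fun x : ℝ => Complex.cos (c * (x:ℂ) - c * π) with hFdef
  have hF0 : F 0 = F (2 * π) := by
    simp only [hFdef]
    have h1 : c * (((0:ℝ)) : ℂ) - c * π = -(c * π) := by push_cast; ring
    have h2 : c * ((2 * π : ℝ) : ℂ) - c * π = c * π := by push_cast; ring
    rw [h1, h2, Complex.cos_neg]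
  have hcont : ContinuousOn F (Set.Icc 0 (2 * π)) := (F_cont c).continuousOn
  set f : C(AddCircle (2 * π), ℂ) :=
    ⟨AddCircle.liftIco (2*π) 0 F, AddCircle.liftIco_zero_continuous hF0 hcont⟩ with hfdef
  have hcoeff : ∀ n : ℤ, fourierCoeff (⇑f) n
      = c * Complex.sin (c * π) / (π * (c ^ 2 - (n : ℂ) ^ 2)) := by
    intro n
    show fourierCoeff (AddCircle.liftIco (2*π) 0 F) n = _
    rw [fourierCoeff_liftIco_eq]
    exact coeff_formula c hc n (lt_add_of_pos_right 0 hT.out)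
  have hsummable : Summable (fourierCoeff (⇑f)) :=
    (summable_congr hcoeff).mpr (summable_formula c hc)
  have hps := has_pointwise_sum_fourier_series_of_summable hsummable (0 : AddCircle (2 * π))
  have hf0 : f (0 : AddCircle (2 * π)) = Complex.cos (c * π) := by
    show AddCircle.liftIco (2*π) 0 F ((0:ℝ) : AddCircle (2*π)) = _
    rw [AddCircle.liftIco_zero_coe_apply (by constructor <;> [rfl; positivity])]
    simp only [hFdef]
    have h1 : c * (((0:ℝ)) : ℂ) - c * π = -(c * π) := by push_cast; ring
    rw [h1, Complex.cos_neg]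
  rw [hf0] at hps
  apply hps.congr_fun
  intro n
  rw [hcoeff n]
  simp

end SeriesA2

namespace SeriesA2

lemma hasSum_trig (b : ℝ) (hb : 0 < b) (hbn : ∀ m : ℕ, b ≠ m) :
    HasSum (fun n : ℤ => b * Real.sin (b * π) / (π * (b ^ 2 - (n:ℝ) ^ 2)))
      (Real.cos (b * π)) := by
  have hc : ∀ n : ℤ, ((b:ℂ)) ^ 2 ≠ (n : ℂ) ^ 2 := by
    intro n h
    have hr : b ^ 2 = (n : ℝ) ^ 2 := by exact_mod_cast h
    have habs : |b| = |(n:ℝ)| := by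
      rw [← Real.sqrt_sq_eq_abs, ← Real.sqrt_sq_eq_abs, hr]
    rw [abs_of_pos hb] at habs
    have : b = (n.natAbs : ℝ) := by
      rw [habs, Nat.cast_natAbs]
      simp
    exact hbn n.natAbs this
  have h := key_hasSum (b:ℂ) hc
  apply Complex.hasSum_ofReal.mp
  rw [show ((Real.cos (b * π) : ℝ) : ℂ) = Complex.cos ((b:ℂ) * (π:ℂ)) by push_cast; rfl]
  apply h.congr_fun
  intro n
  push_cast
  ring

lemma hasSum_hyp (b : ℝ) (hb : 0 < b) :
    HasSum (fun n : ℤ => b * Real.sinh (b * π) / (π * (b ^ 2 + (n:ℝ) ^ 2)))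
      (Real.cosh (b * π)) := by
  have hc : ∀ n : ℤ, (Complex.I * (b:ℂ)) ^ 2 ≠ (n : ℂ) ^ 2 := by
    intro n h
    have h2 : ((b ^ 2 + (n:ℝ) ^ 2 : ℝ) : ℂ) = 0 := by
      push_cast
      linear_combination -h + ((b:ℂ))^2 * Complex.I_sq
    have h3 : b ^ 2 + (n:ℝ) ^ 2 = 0 := by exact_mod_cast h2
    nlinarith
  have h := key_hasSum (Complex.I * (b:ℂ)) hc
  apply Complex.hasSum_ofReal.mp
  have harg : Complex.I * (b:ℂ) * (π:ℂ) = ((b * π : ℝ) : ℂ) * Complex.I := by push_cast; ring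
  rw [harg, Complex.cos_mul_I, Complex.sin_mul_I] at h
  rw [show ((Real.cosh (b * π) : ℝ) : ℂ) = Complex.cosh ((b * π : ℝ):ℂ) by push_cast; rfl]
  apply h.congr_fun
  intro n
  have hden1 : ((π:ℂ)) * ((Complex.I * (b:ℂ)) ^ 2 - (n:ℂ) ^ 2) ≠ 0 := by
    apply mul_ne_zero
    · exact_mod_cast Real.pi_ne_zero
    · exact sub_ne_zero.mpr (hc n)
  have hden2 : ((π * (b ^ 2 + (n:ℝ) ^ 2) : ℝ) : ℂ) ≠ 0 := by
    have : (0:ℝ) < π * (b ^ 2 + (n:ℝ) ^ 2) := by positivity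
    exact_mod_cast this.ne'
  push_cast at hden2 ⊢
  rw [div_eq_div_iff hden2 (by push_cast at hden1 ⊢; exact hden1)]
  linear_combination (-(π:ℂ) * (b:ℂ) * Complex.sinh ((b:ℂ) * (π:ℂ)) * (n:ℂ)^2) * Complex.I_sq

end SeriesA2

namespace SeriesA2

lemma nat_shift {g : ℤ → ℝ} {s : ℝ} (H : HasSum g s) (heven : ∀ n : ℤ, g (-n) = g n) :
    HasSum (fun j : ℕ => 2 * g ((j:ℤ) + 1)) (s - g 0) := by
  have h1 := H.nat_add_neg
  have h2 : (fun n : ℕ => g (n:ℤ) + g (-(n:ℤ))) = fun n : ℕ => 2 * g (n:ℤ) :=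
    funext fun n => by rw [heven]; ring
  rw [h2] at h1
  have h3 := (hasSum_nat_add_iff' (f := fun n : ℕ => 2 * g (n:ℤ)) 1).mpr h1
  simp only [Finset.range_one, Finset.sum_singleton, Nat.cast_zero] at h3
  have hval : s - g 0 = s + g 0 - 2 * g 0 := by ring
  rw [hval]
  apply h3.congr_fun
  intro n
  push_cast
  ring_nf

end SeriesA2

theorem series_identity_A2 (ρ τ : ℝ) (hρ : 0 < ρ) (hτ : 0 < τ)
    (hτ2 : ∀ j : ℕ, τ ≠ 2 * π * j)
    (u : ℕ → ℝ) (hu : ∀ j, u j = 2 * ρ / ((2 * π * j) ^ 2 + ρ ^ 2))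
    (v : ℕ → ℝ) (hv : ∀ j, v j = (2 * π * j / ρ) * u j)
    (lam : ℝ) (hlam : lam = 2 * ρ / (τ ^ 2 + ρ ^ 2))
    (hne : ∀ j : ℕ, 1 ≤ j → lam ≠ u j) :
    ∑' j : ℕ, (v (j + 1)) ^ 2 / (u (j + 1) - lam)
      = τ / (2 * ρ) * (Real.cos (τ / 2) / Real.sin (τ / 2))
        - (Real.cosh (ρ / 2) / Real.sinh (ρ / 2)) / 2 := by
  have hπ := Real.pi_pos
  have hπ' := Real.pi_ne_zero
  set b : ℝ := τ / (2 * π) with hbdef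
  set a : ℝ := ρ / (2 * π) with hadef
  have hb : 0 < b := by positivity
  have ha : 0 < a := by positivity
  have hbn : ∀ m : ℕ, b ≠ m := by
    intro m h
    apply hτ2 m
    rw [hbdef] at h
    field_simp at h
    linarith [h]
  have hbπ : b * π = τ / 2 := by rw [hbdef]; field_simp
  have haπ : a * π = ρ / 2 := by rw [hadef]; field_simp
  have Hτ := SeriesA2.hasSum_trig b hb hbn
  have Hρ := SeriesA2.hasSum_hyp a ha
  rw [hbπ] at Hτ
  rw [haπ] at Hρ
  have HτN := SeriesA2.nat_shift Hτ (by intro n; simp)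
  have HρN := SeriesA2.nat_shift Hρ (by intro n; simp)
  have hsin : Real.sin (τ / 2) ≠ 0 := by
    intro h
    rcases Real.sin_eq_zero_iff.mp h with ⟨n, hn⟩
    have hn0 : 0 < n := by
      rcases lt_trichotomy n 0 with h1 | h1 | h1
      · have hcast : (n:ℝ) ≤ -1 := by exact_mod_cast (by omega : n ≤ -1)
        nlinarith
      · simp [h1] at hn; linarith
      · exact h1
    apply hτ2 n.toNat
    rw [show ((n.toNat : ℕ) : ℝ) = (n : ℝ) by exact_mod_cast congrArg (Int.cast : ℤ → ℝ) (Int.toNat_of_nonneg hn0.le)]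
    linarith
  have hsinh : Real.sinh (ρ / 2) ≠ 0 := by
    intro h
    have := Real.sinh_eq_zero.mp h
    linarith
  set A : ℝ := τ / (2 * ρ * Real.sin (τ / 2)) with hAdef
  set B : ℝ := 1 / (2 * Real.sinh (ρ / 2)) with hBdef
  have H := (HτN.mul_left A).sub (HρN.mul_left B)
  have hfun : (fun j : ℕ => A * (2 * (b * Real.sin (τ/2) / (π * (b ^ 2 - ((j:ℤ)+1:ℤ) ^ 2))))
      - B * (2 * (a * Real.sinh (ρ/2) / (π * (a ^ 2 + ((j:ℤ)+1:ℤ) ^ 2)))))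
      = fun j : ℕ => (v (j + 1)) ^ 2 / (u (j + 1) - lam) := by
    funext j
    rw [hv (j+1), hu (j+1), hlam]
    push_cast
    have hD1 : (2 * π * ((j:ℝ)+1)) ^ 2 + ρ ^ 2 ≠ 0 := by positivity
    have hD3 : τ ^ 2 + ρ ^ 2 ≠ 0 := by positivity
    have hbj : b - ((j:ℝ)+1) ≠ 0 := by
      intro h0
      apply hbn (j+1)
      push_cast
      linarith [sub_eq_zero.mp h0]
    have hbj2 : b + ((j:ℝ)+1) ≠ 0 := by positivity
    have hbsq : b ^ 2 - ((j:ℝ)+1) ^ 2 ≠ 0 := by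
      have e : b ^ 2 - ((j:ℝ)+1) ^ 2 = (b - ((j:ℝ)+1)) * (b + ((j:ℝ)+1)) := by ring
      rw [e]
      exact mul_ne_zero hbj hbj2
    have hasq : a ^ 2 + ((j:ℝ)+1) ^ 2 ≠ 0 := by positivity
    have hD2 : τ ^ 2 - (2 * π * ((j:ℝ)+1)) ^ 2 ≠ 0 := by
      intro h0
      apply hbsq
      rw [hbdef]
      field_simp
      linarith [h0]
    have e : 2 * ρ / ((2 * π * ((j:ℝ)+1)) ^ 2 + ρ ^ 2) - 2 * ρ / (τ ^ 2 + ρ ^ 2)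
        = 2 * ρ * (τ ^ 2 - (2 * π * ((j:ℝ)+1)) ^ 2)
          / (((2 * π * ((j:ℝ)+1)) ^ 2 + ρ ^ 2) * (τ ^ 2 + ρ ^ 2)) := by
      field_simp
      ring
    have term1 : 2 * (b * Real.sin (τ/2) / (π * (b ^ 2 - ((j:ℝ)+1) ^ 2)))
        = Real.sin (τ/2) * (4 * τ / (τ ^ 2 - (2 * π * ((j:ℝ)+1)) ^ 2)) := by
      rw [show 2 * (b * Real.sin (τ/2) / (π * (b ^ 2 - ((j:ℝ)+1) ^ 2)))
            = (2 * b * Real.sin (τ/2)) / (π * (b ^ 2 - ((j:ℝ)+1) ^ 2)) from by ring,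
        show Real.sin (τ/2) * (4 * τ / (τ ^ 2 - (2 * π * ((j:ℝ)+1)) ^ 2))
            = (Real.sin (τ/2) * (4 * τ)) / (τ ^ 2 - (2 * π * ((j:ℝ)+1)) ^ 2) from by ring,
        div_eq_div_iff (mul_ne_zero hπ' hbsq) hD2, hbdef]
      field_simp
      ring
    have term2 : 2 * (a * Real.sinh (ρ/2) / (π * (a ^ 2 + ((j:ℝ)+1) ^ 2)))
        = Real.sinh (ρ/2) * (4 * ρ / ((2 * π * ((j:ℝ)+1)) ^ 2 + ρ ^ 2)) := by
      rw [show 2 * (a * Real.sinh (ρ/2) / (π * (a ^ 2 + ((j:ℝ)+1) ^ 2)))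
            = (2 * a * Real.sinh (ρ/2)) / (π * (a ^ 2 + ((j:ℝ)+1) ^ 2)) from by ring,
        show Real.sinh (ρ/2) * (4 * ρ / ((2 * π * ((j:ℝ)+1)) ^ 2 + ρ ^ 2))
            = (Real.sinh (ρ/2) * (4 * ρ)) / ((2 * π * ((j:ℝ)+1)) ^ 2 + ρ ^ 2) from by ring,
        div_eq_div_iff (mul_ne_zero hπ' hasq) hD1, hadef]
      field_simp
      ring
    rw [e, term1, term2, hAdef, hBdef]
    have termA : τ / (2 * ρ * Real.sin (τ / 2))
          * (Real.sin (τ/2) * (4 * τ / (τ ^ 2 - (2 * π * ((j:ℝ)+1)) ^ 2)))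
        = 2 * τ ^ 2 / (ρ * (τ ^ 2 - (2 * π * ((j:ℝ)+1)) ^ 2)) := by
      field_simp
      ring
    have termB : 1 / (2 * Real.sinh (ρ / 2))
          * (Real.sinh (ρ/2) * (4 * ρ / ((2 * π * ((j:ℝ)+1)) ^ 2 + ρ ^ 2)))
        = 2 * ρ / ((2 * π * ((j:ℝ)+1)) ^ 2 + ρ ^ 2) := by
      field_simp
      ring
    rw [termA, termB]
    have hD2' : τ ^ 2 - 2 ^ 2 * π ^ 2 * ((j:ℝ) + 1) ^ 2 ≠ 0 := by convert hD2 using 1; ring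
    field_simp
    ring
  rw [hfun] at H
  rw [H.tsum_eq, hAdef, hBdef]
  have hg0τ : b * Real.sin (τ/2) / (π * (b ^ 2 - ((0:ℤ):ℝ) ^ 2)) = Real.sin (τ/2) * (2 / τ) := by
    rw [hbdef]
    field_simp
    ring
  have hg0ρ : a * Real.sinh (ρ/2) / (π * (a ^ 2 + ((0:ℤ):ℝ) ^ 2)) = Real.sinh (ρ/2) * (2 / ρ) := by
    rw [hadef]
    field_simp
    ring
  rw [hg0τ, hg0ρ]
  field_simp
  ring
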